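/- With D(h_L) and ĥ_F(h_L) as defined, ĥ_F(h_L) ≥ 1 for all h_F-relevant purposes if and only if ((h_L·C−1)/(C−1))·ρ − D(h_L) ≥ 0; equivalently the quadratic inequality −(C((1−h_L)/(C−1))² + C(1−h_S)²/(C−1) + ((h_L·C−1)/(C−1))²) + ((h_L·C−1)/(C−1))·ρ ≥ 0 in h_L has its solution set within [0,1] of the form [h_L^+, 1] for some h_L^+ ∈ (1/C, 1), provided ρ is sufficiently large (ρ > (C+1+C(C−1)(1−h_S)²+ (C−1))/(C−1) suffices). -/

import Mathlib

/-- `ĥ_F(h_L) ≥ 1` iff `((h_L C - 1)/(C-1)) ρ - D(h_L) ≥ 0` (given `D > 0`), and for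
sufficiently large `ρ` the solution set of this quadratic inequality within `[0,1]` is
`[h_L⁺, 1]` for some `h_L⁺ ∈ (1/C, 1)`. -/
theorem stmt_9 (C : ℕ) (hC : 2 ≤ C) (hS ρ : ℝ) (hhS : hS ∈ Set.Ico (0 : ℝ) 1) (hρpos : 0 < ρ)
    (D hatF : ℝ → ℝ)
    (hD : D = fun hL : ℝ => (C : ℝ) * ((1 - hL) / ((C : ℝ) - 1)) ^ 2 +
      (C : ℝ) * (1 - hS) ^ 2 / ((C : ℝ) - 1) + ((hL * C - 1) / ((C : ℝ) - 1)) ^ 2)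
    (hhat : hatF = fun hL : ℝ => ((hL * C - 1) / ((C : ℝ) - 1)) * ρ / D hL)
    (hρ : ρ > ((C : ℝ) + 1 + C * ((C : ℝ) - 1) * (1 - hS) ^ 2 + ((C : ℝ) - 1)) / ((C : ℝ) - 1)) :
    (∀ hL : ℝ, 0 < D hL →
      (1 ≤ hatF hL ↔ 0 ≤ ((hL * C - 1) / ((C : ℝ) - 1)) * ρ - D hL)) ∧
    ∃ hLp ∈ Set.Ioo (1 / (C : ℝ)) 1,
      {x ∈ Set.Icc (0 : ℝ) 1 | 0 ≤ ((x * C - 1) / ((C : ℝ) - 1)) * ρ - D x} =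
        Set.Icc hLp 1 := by
  have hc : (2:ℝ) ≤ (C:ℝ) := by exact_mod_cast hC
  have hc1 : (0:ℝ) < (C:ℝ) - 1 := by linarith
  have hCpos : (0:ℝ) < (C:ℝ) := by linarith
  have hCne : ((C:ℝ)) ≠ 0 := ne_of_gt hCpos
  have hc1ne : ((C:ℝ) - 1) ≠ 0 := ne_of_gt hc1
  obtain ⟨hS0, hS1⟩ := hhS
  have hρ' : ((C:ℝ) + 1 + C * ((C:ℝ) - 1) * (1 - hS) ^ 2 + ((C:ℝ) - 1)) < ρ * ((C:ℝ) - 1) := by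
    rw [gt_iff_lt, div_lt_iff₀ hc1] at hρ; linarith
  have hρ2 : (2:ℝ) < ρ := by nlinarith [sq_nonneg (1 - hS), mul_pos hCpos hc1]
  set g : ℝ → ℝ := fun x => (x * (C:ℝ) - 1) * ((C:ℝ) - 1) * ρ - (C:ℝ) * (1 - x) ^ 2
      - (C:ℝ) * (1 - hS) ^ 2 * ((C:ℝ) - 1) - (x * (C:ℝ) - 1) ^ 2 with hg
  have hfg : ∀ x : ℝ, ((x * (C:ℝ) - 1) / ((C:ℝ) - 1)) * ρ - D x = g x / ((C:ℝ) - 1) ^ 2 := by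
    intro x
    rw [hD, hg]
    field_simp
    ring
  have hsq : (0:ℝ) < ((C:ℝ) - 1) ^ 2 := by positivity
  constructor
  · intro hL hDpos
    rw [hhat]
    simp only
    rw [one_le_div hDpos, ← sub_nonneg]
  · have hgmono : ∀ x y : ℝ, x ≤ 1 → y ≤ 1 → x < y → g x < g y := by
      intro x y hx hy hxy
      have hb : (0:ℝ) < ((C:ℝ) - 1) * ρ + 4 - (x + y) * ((C:ℝ) + 1) := by nlinarith
      have hp : (0:ℝ) < (y - x) * (C:ℝ) * (((C:ℝ) - 1) * ρ + 4 - (x + y) * ((C:ℝ) + 1)) :=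
        mul_pos (mul_pos (by linarith) hCpos) hb
      simp only [hg]
      nlinarith [hp]
    have hgneg : g (1 / (C:ℝ)) < 0 := by
      have h1 : (1 / (C:ℝ)) * (C:ℝ) - 1 = 0 := by field_simp; ring
      have h2 : (0:ℝ) < (1 - hS) ^ 2 := pow_pos (by linarith) 2
      simp only [hg]
      rw [h1]
      nlinarith [sq_nonneg (1 - 1 / (C:ℝ)), mul_pos (mul_pos hCpos h2) hc1]
    have hgpos : 0 < g 1 := by
      simp only [hg]
      have hm := mul_lt_mul_of_pos_left hρ' hc1
      nlinarith [hm, sq_nonneg (1 - hS),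
        mul_nonneg (mul_nonneg hCpos.le (by linarith : (0:ℝ) ≤ (C:ℝ) - 2)) (sq_nonneg (1 - hS))]
    have hgc : Continuous g := by simp only [hg]; fun_prop
    have h1c : 1 / (C:ℝ) ≤ 1 := by rw [div_le_one hCpos]; linarith
    have hsub := intermediate_value_Icc h1c hgc.continuousOn
    have h0mem : (0:ℝ) ∈ Set.Icc (g (1 / (C:ℝ))) (g 1) := ⟨le_of_lt hgneg, le_of_lt hgpos⟩
    obtain ⟨hLp, hLpmem, hroot⟩ := hsub h0mem
    have hne1 : hLp ≠ 1 / (C:ℝ) := by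
      intro h; rw [h] at hroot; rw [hroot] at hgneg; exact lt_irrefl 0 hgneg
    have hne2 : hLp ≠ 1 := by
      intro h; rw [h] at hroot; rw [hroot] at hgpos; exact lt_irrefl 0 hgpos
    have hLplt1 : hLp < 1 := lt_of_le_of_ne hLpmem.2 hne2
    have hLpgt : 1 / (C:ℝ) < hLp := lt_of_le_of_ne hLpmem.1 (Ne.symm hne1)
    refine ⟨hLp, ⟨hLpgt, hLplt1⟩, ?_⟩
    ext x
    simp only [Set.mem_setOf_eq, Set.mem_Icc, Set.mem_sep_iff]
    constructor
    · rintro ⟨⟨hx0, hx1⟩, hfx⟩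
      refine ⟨?_, hx1⟩
      by_contra hcon
      push_neg at hcon
      have hlt : g x < g hLp := hgmono x hLp hx1 (le_of_lt hLplt1) hcon
      rw [hroot] at hlt
      rw [hfg x] at hfx
      have : g x / ((C:ℝ) - 1) ^ 2 < 0 := div_neg_of_neg_of_pos hlt hsq
      linarith
    · rintro ⟨hx0, hx1⟩
      have hx0' : (0:ℝ) ≤ x := by
        have : (0:ℝ) < 1 / (C:ℝ) := by positivity
        linarith
      refine ⟨⟨hx0', hx1⟩, ?_⟩
      rw [hfg x]
      have hgx : 0 ≤ g x := by
        rcases eq_or_lt_of_le hx0 with h | h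
        · rw [← h, hroot]
        · have hlt := hgmono hLp x (le_of_lt hLplt1) hx1 h
          rw [hroot] at hlt; exact le_of_lt hlt
      exact div_nonneg hgx (le_of_lt hsq)
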